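/- arXiv:1811.07781 — 2 statements merged into one kernel-verified Lean document; each statement's English description precedes it below -/
import Mathlib

section
/- Fix κ ≥ 0. If A ∈ C²(I, M²) satisfies det A(t) = 1 on an interval I and solves Ä(t) + κA(t) = λ(t)·cof A(t) on I for some continuous function λ, then the three quantities X₁(A(t),Ȧ(t)), X₂(A(t),Ȧ(t)), X₃(A(t),Ȧ(t)) are constant in t. -/
open Matrix

noncomputable section

/-- `M²`: the space of 2×2 real matrices. -/
abbrev M2 : Type := Matrix (Fin 2) (Fin 2) ℝ

/-- Frobenius inner product `⟨A,B⟩ = tr(AᵀB)`. -/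
def mip (A B : M2) : ℝ := (Aᵀ * B).trace

/-- Frobenius norm `|A| = ⟨A,A⟩^{1/2}`. -/
def fnorm (A : M2) : ℝ := Real.sqrt (mip A A)

/-- The matrix Z = [[0,−1],[1,0]]. -/
def Zm : M2 := !![0, -1; 1, 0]

/-- The matrix K = [[1,0],[0,−1]]. -/
def Km : M2 := !![1, 0; 0, -1]

/-- The matrix M = [[0,1],[1,0]]. -/
def Mm : M2 := !![0, 1; 1, 0]

/-- Cofactor: cof [[a,b],[c,d]] = [[d,−c],[−b,a]]. -/
def cofm (A : M2) : M2 := !![A 1 1, -(A 1 0); -(A 0 1), A 0 0]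

/-- Membership in SO(2,ℝ). -/
def isSO (U : M2) : Prop := U.det = 1 ∧ U⁻¹ = Uᵀ

/-- The rotation U(θ) = cos θ·I + sin θ·Z. -/
def Um (θ : ℝ) : M2 := Real.cos θ • (1 : M2) + Real.sin θ • Zm

/-- Invariant X₁(A,B) = ½|B|² + (κ/2)|A|². -/
def X1 (κ : ℝ) (A B : M2) : ℝ := (1/2) * mip B B + (κ/2) * mip A A

/-- Invariant X₂(A,B) = ½⟨ZA − AZ, B⟩. -/
def X2 (A B : M2) : ℝ := (1/2) * mip (Zm * A - A * Zm) B

/-- Invariant X₃(A,B) = ½⟨ZA + AZ, B⟩. -/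
def X3 (A B : M2) : ℝ := (1/2) * mip (Zm * A + A * Zm) B

/-- Lagrange multiplier Λ(A,B) = 2(κ − det B)/|A|². -/
def Lam (κ : ℝ) (A B : M2) : ℝ := 2 * (κ - B.det) / (mip A A)

attribute [local instance] Matrix.normedAddCommGroup Matrix.normedSpace


lemma mip_expand (A B : M2) : mip A B =
    A 0 0 * B 0 0 + A 0 1 * B 0 1 + A 1 0 * B 1 0 + A 1 1 * B 1 1 := by
  simp [mip, Matrix.trace, Matrix.mul_apply, Fin.sum_univ_two, Matrix.transpose_apply]
  ring

lemma entry_hasDerivAt {f : ℝ → M2} {f' : M2} {t : ℝ} (h : HasDerivAt f f' t) (i j : Fin 2) :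
    HasDerivAt (fun s => f s i j) (f' i j) t :=
  hasDerivAt_pi.mp (hasDerivAt_pi.mp h i) j

lemma ZP_sub (P B : M2) : mip (Zm * P - P * Zm) B =
    (-(P 0 1) - P 1 0) * B 0 0 + (P 0 0 - P 1 1) * B 0 1 +
    (P 0 0 - P 1 1) * B 1 0 + (P 0 1 + P 1 0) * B 1 1 := by
  rw [mip_expand]
  simp [Zm, Matrix.mul_apply, Fin.sum_univ_two, Matrix.sub_apply, Matrix.vecMul, dotProduct]
  ring

lemma ZP_add (P B : M2) : mip (Zm * P + P * Zm) B =
    (P 0 1 - P 1 0) * B 0 0 + (-(P 0 0) - P 1 1) * B 0 1 +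
    (P 0 0 + P 1 1) * B 1 0 + (P 0 1 - P 1 0) * B 1 1 := by
  rw [mip_expand]
  simp [Zm, Matrix.mul_apply, Fin.sum_univ_two, Matrix.add_apply, Matrix.vecMul, dotProduct]
  ring

lemma const_of_deriv0 {f : ℝ → ℝ} {a b : ℝ}
    (h : ∀ x ∈ Set.Ioo a b, HasDerivAt f 0 x) :
    ∀ s ∈ Set.Ioo a b, ∀ t ∈ Set.Ioo a b, f s = f t := by
  have key : ∀ s ∈ Set.Ioo a b, ∀ t ∈ Set.Ioo a b, s ≤ t → f t = f s := by
    intro s hs t ht hst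
    have hsub : Set.Icc s t ⊆ Set.Ioo a b := fun x hx =>
      ⟨lt_of_lt_of_le hs.1 hx.1, lt_of_le_of_lt hx.2 ht.2⟩
    exact constant_of_has_deriv_right_zero
      (fun x hx => (h x (hsub hx)).continuousAt.continuousWithinAt)
      (fun x hx => (h x (hsub ⟨hx.1, le_of_lt hx.2⟩)).hasDerivWithinAt)
      t ⟨hst, le_refl t⟩
  intro s hs t ht
  rcases le_total s t with hst | hst
  · exact (key s hs t ht hst).symm
  · exact key t ht s hs hst

/-- the quantities X₁, X₂, X₃ are invariant along solutions. -/
theorem invariants_conserved (κ : ℝ) (hκ : 0 ≤ κ) (a b : ℝ)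
    (A A' A'' : ℝ → M2) (lam : ℝ → ℝ)
    (hA : ∀ t ∈ Set.Ioo a b, HasDerivAt A (A' t) t)
    (hA' : ∀ t ∈ Set.Ioo a b, HasDerivAt A' (A'' t) t)
    (hlam : ContinuousOn lam (Set.Ioo a b))
    (hdet : ∀ t ∈ Set.Ioo a b, (A t).det = 1)
    (hode : ∀ t ∈ Set.Ioo a b, A'' t + κ • A t = lam t • cofm (A t)) :
    ∀ s ∈ Set.Ioo a b, ∀ t ∈ Set.Ioo a b,
      X1 κ (A s) (A' s) = X1 κ (A t) (A' t) ∧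
      X2 (A s) (A' s) = X2 (A t) (A' t) ∧
      X3 (A s) (A' s) = X3 (A t) (A' t) := by
  have setup : ∀ t ∈ Set.Ioo a b,
      (∀ i j, HasDerivAt (fun s => A s i j) (A' t i j) t) ∧
      (∀ i j, HasDerivAt (fun s => A' s i j) (A'' t i j) t) ∧
      (A'' t 0 0 = lam t * A t 1 1 - κ * A t 0 0) ∧
      (A'' t 0 1 = lam t * (-(A t 1 0)) - κ * A t 0 1) ∧
      (A'' t 1 0 = lam t * (-(A t 0 1)) - κ * A t 1 0) ∧
      (A'' t 1 1 = lam t * A t 0 0 - κ * A t 1 1) ∧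
      (A' t 0 0 * A t 1 1 + A t 0 0 * A' t 1 1 -
        (A' t 0 1 * A t 1 0 + A t 0 1 * A' t 1 0) = 0) := by
    intro t ht
    have ha : ∀ i j, HasDerivAt (fun s => A s i j) (A' t i j) t :=
      fun i j => entry_hasDerivAt (hA t ht) i j
    have hb : ∀ i j, HasDerivAt (fun s => A' s i j) (A'' t i j) t :=
      fun i j => entry_hasDerivAt (hA' t ht) i j
    have hc : ∀ i j, A'' t i j = lam t * cofm (A t) i j - κ * A t i j := by
      intro i j
      have h := congrFun (congrFun (hode t ht) i) j
      simp only [Matrix.add_apply, Matrix.smul_apply, smul_eq_mul] at h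
      linarith
    have hdz : A' t 0 0 * A t 1 1 + A t 0 0 * A' t 1 1 -
        (A' t 0 1 * A t 1 0 + A t 0 1 * A' t 1 0) = 0 := by
      have h1 : HasDerivAt (fun s => A s 0 0 * A s 1 1 - A s 0 1 * A s 1 0)
          (A' t 0 0 * A t 1 1 + A t 0 0 * A' t 1 1 -
            (A' t 0 1 * A t 1 0 + A t 0 1 * A' t 1 0)) t :=
        ((ha 0 0).mul (ha 1 1)).sub ((ha 0 1).mul (ha 1 0))
      have h2 : HasDerivAt (fun s => A s 0 0 * A s 1 1 - A s 0 1 * A s 1 0) 0 t := by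
        have heq : (fun s => A s 0 0 * A s 1 1 - A s 0 1 * A s 1 0)
            =ᶠ[nhds t] fun _ => (1:ℝ) := by
          filter_upwards [isOpen_Ioo.mem_nhds ht] with x hx
          have h := hdet x hx
          rw [Matrix.det_fin_two] at h
          exact h
        exact (hasDerivAt_const t (1:ℝ)).congr_of_eventuallyEq heq
      exact h1.unique h2
    refine ⟨ha, hb, ?_, ?_, ?_, ?_, hdz⟩
    · simpa [cofm] using hc 0 0
    · simpa [cofm] using hc 0 1
    · simpa [cofm] using hc 1 0
    · simpa [cofm] using hc 1 1
  have H1 : ∀ t ∈ Set.Ioo a b, HasDerivAt (fun s => X1 κ (A s) (A' s)) 0 t := by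
    intro t ht
    obtain ⟨ha, hb, hc00, hc01, hc10, hc11, hdz⟩ := setup t ht
    have e : (fun s => X1 κ (A s) (A' s)) = fun s =>
        (1/2) * (A' s 0 0 * A' s 0 0 + A' s 0 1 * A' s 0 1 +
          A' s 1 0 * A' s 1 0 + A' s 1 1 * A' s 1 1) +
        (κ/2) * (A s 0 0 * A s 0 0 + A s 0 1 * A s 0 1 +
          A s 1 0 * A s 1 0 + A s 1 1 * A s 1 1) := by
      funext s; rw [X1, mip_expand, mip_expand]
    rw [e]
    have H := (((((hb 0 0).mul (hb 0 0)).add ((hb 0 1).mul (hb 0 1))).add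
        ((hb 1 0).mul (hb 1 0))).add ((hb 1 1).mul (hb 1 1))).const_mul ((1:ℝ)/2) |>.add
      ((((((ha 0 0).mul (ha 0 0)).add ((ha 0 1).mul (ha 0 1))).add
        ((ha 1 0).mul (ha 1 0))).add ((ha 1 1).mul (ha 1 1))).const_mul (κ/2))
    refine H.congr_deriv ?_
    symm
    linear_combination (-(A' t 0 0)) * hc00 + (-(A' t 0 1)) * hc01 +
      (-(A' t 1 0)) * hc10 + (-(A' t 1 1)) * hc11 + (-(lam t)) * hdz
  have H2 : ∀ t ∈ Set.Ioo a b, HasDerivAt (fun s => X2 (A s) (A' s)) 0 t := by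
    intro t ht
    obtain ⟨ha, hb, hc00, hc01, hc10, hc11, hdz⟩ := setup t ht
    have e : (fun s => X2 (A s) (A' s)) = fun s =>
        (1/2) * ((-(A s 0 1) - A s 1 0) * A' s 0 0 + (A s 0 0 - A s 1 1) * A' s 0 1 +
          (A s 0 0 - A s 1 1) * A' s 1 0 + (A s 0 1 + A s 1 0) * A' s 1 1) := by
      funext s; rw [X2, ZP_sub]
    rw [e]
    have H := (((((ha 0 1).neg.sub (ha 1 0)).mul (hb 0 0)).add
        (((ha 0 0).sub (ha 1 1)).mul (hb 0 1))).add
        (((ha 0 0).sub (ha 1 1)).mul (hb 1 0))).add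
        (((ha 0 1).add (ha 1 0)).mul (hb 1 1)) |>.const_mul ((1:ℝ)/2)
    refine H.congr_deriv ?_
    symm
    simp only [Pi.neg_apply, Pi.sub_apply, Pi.add_apply]
    linear_combination (-(1:ℝ)/2) * (-(A t 0 1) - A t 1 0) * hc00 +
      (-(1:ℝ)/2) * (A t 0 0 - A t 1 1) * hc01 +
      (-(1:ℝ)/2) * (A t 0 0 - A t 1 1) * hc10 +
      (-(1:ℝ)/2) * (A t 0 1 + A t 1 0) * hc11
  have H3 : ∀ t ∈ Set.Ioo a b, HasDerivAt (fun s => X3 (A s) (A' s)) 0 t := by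
    intro t ht
    obtain ⟨ha, hb, hc00, hc01, hc10, hc11, hdz⟩ := setup t ht
    have e : (fun s => X3 (A s) (A' s)) = fun s =>
        (1/2) * ((A s 0 1 - A s 1 0) * A' s 0 0 + (-(A s 0 0) - A s 1 1) * A' s 0 1 +
          (A s 0 0 + A s 1 1) * A' s 1 0 + (A s 0 1 - A s 1 0) * A' s 1 1) := by
      funext s; rw [X3, ZP_add]
    rw [e]
    have H := (((((ha 0 1).sub (ha 1 0)).mul (hb 0 0)).add
        (((ha 0 0).neg.sub (ha 1 1)).mul (hb 0 1))).add
        (((ha 0 0).add (ha 1 1)).mul (hb 1 0))).add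
        (((ha 0 1).sub (ha 1 0)).mul (hb 1 1)) |>.const_mul ((1:ℝ)/2)
    refine H.congr_deriv ?_
    symm
    simp only [Pi.neg_apply, Pi.sub_apply, Pi.add_apply]
    linear_combination (-(1:ℝ)/2) * (A t 0 1 - A t 1 0) * hc00 +
      (-(1:ℝ)/2) * (-(A t 0 0) - A t 1 1) * hc01 +
      (-(1:ℝ)/2) * (A t 0 0 + A t 1 1) * hc10 +
      (-(1:ℝ)/2) * (A t 0 1 - A t 1 0) * hc11
  intro s hs t ht
  exact ⟨const_of_deriv0 H1 s hs t ht, const_of_deriv0 H2 s hs t ht,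
    const_of_deriv0 H3 s hs t ht⟩
end
end

section
/- Fix κ ≥ 0. If A ∈ C²(ℝ, M²) satisfies det A(t) = 1 for all t and solves Ä(t) + κA(t) = λ(t)·cof A(t) for some λ ∈ C⁰(ℝ,ℝ), then the sign of λ is constant in time: for all t ∈ ℝ, λ(t) > 0 iff λ(0) > 0, λ(t) = 0 iff λ(0) = 0, and λ(t) < 0 iff λ(0) < 0. (In the fluid interpretation, the sign of the pressure is preserved under affine motion.) -/
open Matrix

noncomputable section

attribute [local instance] Matrix.normedAddCommGroup Matrix.normedSpace

private def entryCLM (i j : Fin 2) : M2 →L[ℝ] ℝ :=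
  LinearMap.toContinuousLinearMap
    { toFun := fun M => M i j
      map_add' := by intros; simp
      map_smul' := by intros; simp }

private lemma hasDerivAt_entry {g : ℝ → M2} {g' : M2} {t : ℝ}
    (h : HasDerivAt g g' t) (i j : Fin 2) :
    HasDerivAt (fun s => g s i j) (g' i j) t :=
  (entryCLM i j).hasFDerivAt.comp_hasDerivAt t h


/-- the sign of the multiplier (pressure) is preserved in time. -/
theorem pressure_sign_preserved (κ : ℝ) (hκ : 0 ≤ κ) (A : ℝ → M2) (lam : ℝ → ℝ)
    (hA : ContDiff ℝ 2 A) (hlam : Continuous lam)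
    (hdet : ∀ t : ℝ, (A t).det = 1)
    (hode : ∀ t : ℝ, deriv (deriv A) t + κ • A t = lam t • cofm (A t)) :
    ∀ t : ℝ, (0 < lam t ↔ 0 < lam 0) ∧ (lam t = 0 ↔ lam 0 = 0) ∧
      (lam t < 0 ↔ lam 0 < 0) := by
  have h2 : ContDiff ℝ ((1:ℕ∞)+1) A := by exact_mod_cast hA
  have hA1 : Differentiable ℝ A := (contDiff_succ_iff_deriv.mp h2).1
  have hB1 : Differentiable ℝ (deriv A) :=
    (contDiff_succ_iff_deriv.mp h2).2.2.differentiable (by simp)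
  have ha : ∀ (i j : Fin 2) (s : ℝ), HasDerivAt (fun u => A u i j) (deriv A s i j) s :=
    fun i j s => hasDerivAt_entry (hA1 s).hasDerivAt i j
  have hb : ∀ (i j : Fin 2) (s : ℝ),
      HasDerivAt (fun u => deriv A u i j) (lam s * cofm (A s) i j - κ * A s i j) s := by
    intro i j s
    have h1 : HasDerivAt (deriv A) (deriv (deriv A) s) s := (hB1 s).hasDerivAt
    have h2' : deriv (deriv A) s = lam s • cofm (A s) - κ • A s := eq_sub_of_add_eq (hode s)
    rw [h2'] at h1
    simpa [Matrix.sub_apply, Matrix.smul_apply, smul_eq_mul] using hasDerivAt_entry h1 i j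
  have hdet2 : ∀ s : ℝ, A s 0 0 * A s 1 1 - A s 0 1 * A s 1 0 = 1 := by
    intro s; have := hdet s; rwa [Matrix.det_fin_two] at this
  have c00 : ∀ s : ℝ, cofm (A s) 0 0 = A s 1 1 := fun s => by simp [cofm]
  have c01 : ∀ s : ℝ, cofm (A s) 0 1 = -(A s 1 0) := fun s => by simp [cofm]
  have c10 : ∀ s : ℝ, cofm (A s) 1 0 = -(A s 0 1) := fun s => by simp [cofm]
  have c11 : ∀ s : ℝ, cofm (A s) 1 1 = A s 0 0 := fun s => by simp [cofm]
  -- derivative of det A is zero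
  have hD1 : ∀ s : ℝ, deriv A s 0 0 * A s 1 1 + A s 0 0 * deriv A s 1 1
      - (deriv A s 0 1 * A s 1 0 + A s 0 1 * deriv A s 1 0) = 0 := by
    intro s
    have hd := ((ha 0 0 s).mul (ha 1 1 s)).sub ((ha 0 1 s).mul (ha 1 0 s))
    have h0 : HasDerivAt (fun u => A u 0 0 * A u 1 1 - A u 0 1 * A u 1 0) 0 s := by
      have he : (fun u : ℝ => A u 0 0 * A u 1 1 - A u 0 1 * A u 1 0) = fun _ => (1:ℝ) :=
        funext fun u => hdet2 u
      rw [he]; exact hasDerivAt_const s 1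
    have hE := hd.unique h0
    linarith [hE]
  -- λ |A|² = 2(κ - det A')
  have lamf : ∀ s : ℝ, lam s * (A s 0 0 * A s 0 0 + A s 0 1 * A s 0 1
        + A s 1 0 * A s 1 0 + A s 1 1 * A s 1 1)
      = 2 * (κ - (deriv A s 0 0 * deriv A s 1 1 - deriv A s 0 1 * deriv A s 1 0)) := by
    intro s
    have hd := (((hb 0 0 s).mul (ha 1 1 s)).add ((ha 0 0 s).mul (hb 1 1 s))).sub
      (((hb 0 1 s).mul (ha 1 0 s)).add ((ha 0 1 s).mul (hb 1 0 s)))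
    have h0 : HasDerivAt (fun u => (deriv A u 0 0 * A u 1 1 + A u 0 0 * deriv A u 1 1)
        - (deriv A u 0 1 * A u 1 0 + A u 0 1 * deriv A u 1 0)) 0 s := by
      have he : (fun u : ℝ => (deriv A u 0 0 * A u 1 1 + A u 0 0 * deriv A u 1 1)
          - (deriv A u 0 1 * A u 1 0 + A u 0 1 * deriv A u 1 0)) = fun _ => (0:ℝ) :=
        funext fun u => by have := hD1 u; linarith
      rw [he]; exact hasDerivAt_const s 0
    have hE := hd.unique h0
    rw [c00 s, c01 s, c10 s, c11 s] at hE
    linear_combination hE + 2*κ*(hdet2 s)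
  -- the conserved quantity
  have Hh : ∀ s : ℝ, HasDerivAt (fun u => (A u 0 0 * A u 0 0 + A u 0 1 * A u 0 1
      + A u 1 0 * A u 1 0 + A u 1 1 * A u 1 1)
      * (κ - (deriv A u 0 0 * deriv A u 1 1 - deriv A u 0 1 * deriv A u 1 0))) 0 s := by
    intro s
    have F := ((((ha 0 0 s).mul (ha 0 0 s)).add ((ha 0 1 s).mul (ha 0 1 s))).add
      ((ha 1 0 s).mul (ha 1 0 s))).add ((ha 1 1 s).mul (ha 1 1 s))
    have G := (hasDerivAt_const s κ).sub
      (((hb 0 0 s).mul (hb 1 1 s)).sub ((hb 0 1 s).mul (hb 1 0 s)))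
    have hh := F.mul G
    refine hh.congr_deriv (Eq.symm ?_)
    simp only [Pi.mul_apply, Pi.add_apply, Pi.sub_apply]
    rw [c00 s, c01 s, c10 s, c11 s]
    linear_combination (A s 0 0 * deriv A s 0 0 + A s 0 1 * deriv A s 0 1
        + A s 1 0 * deriv A s 1 0 + A s 1 1 * deriv A s 1 1) * lamf s
      - κ * (A s 0 0 * A s 0 0 + A s 0 1 * A s 0 1 + A s 1 0 * A s 1 0
        + A s 1 1 * A s 1 1) * hD1 s
  intro t
  have hconst : (A t 0 0 * A t 0 0 + A t 0 1 * A t 0 1 + A t 1 0 * A t 1 0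
        + A t 1 1 * A t 1 1)
      * (κ - (deriv A t 0 0 * deriv A t 1 1 - deriv A t 0 1 * deriv A t 1 0))
      = (A 0 0 0 * A 0 0 0 + A 0 0 1 * A 0 0 1 + A 0 1 0 * A 0 1 0
        + A 0 1 1 * A 0 1 1)
      * (κ - (deriv A 0 0 0 * deriv A 0 1 1 - deriv A 0 0 1 * deriv A 0 1 0)) :=
    is_const_of_deriv_eq_zero (fun s => (Hh s).differentiableAt)
      (fun s => (Hh s).deriv) t 0
  have hfpos : ∀ s : ℝ, 0 < A s 0 0 * A s 0 0 + A s 0 1 * A s 0 1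
      + A s 1 0 * A s 1 0 + A s 1 1 * A s 1 1 := by
    intro s
    nlinarith [hdet2 s, sq_nonneg (A s 0 0 - A s 1 1), sq_nonneg (A s 0 1 + A s 1 0)]
  set ft := A t 0 0 * A t 0 0 + A t 0 1 * A t 0 1 + A t 1 0 * A t 1 0 + A t 1 1 * A t 1 1 with hft
  set f0 := A 0 0 0 * A 0 0 0 + A 0 0 1 * A 0 0 1 + A 0 1 0 * A 0 1 0 + A 0 1 1 * A 0 1 1 with hf0
  have hftpos : 0 < ft := hfpos t
  have hf0pos : 0 < f0 := hfpos 0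
  have key : lam t * (ft * ft) = lam 0 * (f0 * f0) := by
    linear_combination ft * lamf t - f0 * lamf 0 + 2 * hconst
  have hf0sq : 0 < f0 * f0 := mul_pos hf0pos hf0pos
  have hftsq : 0 < ft * ft := mul_pos hftpos hftpos
  refine ⟨⟨fun h => ?_, fun h => ?_⟩, ⟨fun h => ?_, fun h => ?_⟩, ⟨fun h => ?_, fun h => ?_⟩⟩
  · have h1 : 0 < lam 0 * (f0 * f0) := key ▸ mul_pos h hftsq
    rcases mul_pos_iff.mp h1 with ⟨h2, _⟩ | ⟨_, h2⟩
    · exact h2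
    · exact absurd h2 (not_lt.mpr hf0sq.le)
  · have h1 : 0 < lam t * (ft * ft) := key.symm ▸ mul_pos h hf0sq
    rcases mul_pos_iff.mp h1 with ⟨h2, _⟩ | ⟨_, h2⟩
    · exact h2
    · exact absurd h2 (not_lt.mpr hftsq.le)
  · have h0 : lam 0 * (f0 * f0) = 0 := by rw [← key, h, zero_mul]
    rcases mul_eq_zero.mp h0 with h' | h'
    · exact h'
    · exact absurd h' (ne_of_gt hf0sq)
  · have h0 : lam t * (ft * ft) = 0 := by rw [key, h, zero_mul]
    rcases mul_eq_zero.mp h0 with h' | h'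
    · exact h'
    · exact absurd h' (ne_of_gt hftsq)
  · have h1 : lam 0 * (f0 * f0) < 0 := key ▸ mul_neg_of_neg_of_pos h hftsq
    rcases mul_neg_iff.mp h1 with ⟨_, h2⟩ | ⟨h2, _⟩
    · exact absurd h2 (not_lt.mpr hf0sq.le)
    · exact h2
  · have h1 : lam t * (ft * ft) < 0 := key.symm ▸ mul_neg_of_neg_of_pos h hf0sq
    rcases mul_neg_iff.mp h1 with ⟨_, h2⟩ | ⟨h2, _⟩
    · exact absurd h2 (not_lt.mpr hftsq.le)
    · exact h2
end
end
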